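/- Every finite semimodular lattice L has a length-preserving lattice embedding into a finite geometric lattice K with |At(K)| = |Jir(L)|, where At(K) is the set of atoms of K. -/

import Mathlib

set_option maxHeartbeats 1000000
set_option linter.unusedSectionVars false

/-- A lattice is (upper) semimodular if `x ⊓ y ⋖ x` implies `y ⋖ x ⊔ y`. -/
def Semimodular (L : Type*) [Lattice L] : Prop :=
  ∀ x y : L, x ⊓ y ⋖ x → y ⋖ x ⊔ y

namespace GKproof

attribute [local instance 10] Classical.propDecidable

/-- Chains of covering relations of length `n` from `a` to `b`. -/
inductive CChain {L : Type*} [PartialOrder L] : L → L → ℕ → Prop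
  | refl (a : L) : CChain a a 0
  | step {a b c : L} {n : ℕ} (h : a ⋖ b) (hc : CChain b c n) : CChain a c (n + 1)

variable {L : Type*}

section general
variable [CompleteLattice L] [Fintype L]

/-- Natural-number height. -/
noncomputable def hN (x : L) : ℕ := (Order.height x).toNat

lemma height_ne_top (x : L) : Order.height x ≠ ⊤ := by
  have h : Order.height x ≤ (Fintype.card L : ℕ∞) := by
    apply Order.height_le
    intro p _
    exact_mod_cast p.length_lt_card.le
  intro hx
  rw [hx] at h
  simp at h

lemma coe_hN (x : L) : (hN x : ℕ∞) = Order.height x := ENat.coe_toNat (height_ne_top x)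

lemma hN_lt_of_lt {x y : L} (h : x < y) : hN x < hN y := by
  have := Order.height_strictMono h (lt_top_iff_ne_top.mpr (height_ne_top x))
  rw [← coe_hN, ← coe_hN] at this
  exact_mod_cast this

lemma hN_mono {x y : L} (h : x ≤ y) : hN x ≤ hN y := by
  rcases eq_or_lt_of_le h with rfl | h
  · exact le_rfl
  · exact (hN_lt_of_lt h).le

lemma hN_bot : hN (⊥ : L) = 0 := by
  simp [hN]

lemma hN_eq_zero_iff {x : L} : hN x = 0 ↔ x = ⊥ := by
  constructor
  · intro h
    have : Order.height x = 0 := by rw [← coe_hN, h]; rfl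
    exact (Order.height_eq_zero.mp this).eq_bot
  · rintro rfl; exact hN_bot

lemma one_le_hN_of_ne_bot {x : L} (h : x ≠ ⊥) : 1 ≤ hN x :=
  Nat.one_le_iff_ne_zero.mpr (fun h0 => h (hN_eq_zero_iff.mp h0))

end general

namespace CChain

variable [PartialOrder L] {a b c : L} {m n : ℕ}

lemma le (h : CChain a b n) : a ≤ b := by
  induction h with
  | refl => exact le_rfl
  | step h _ ih => exact h.le.trans ih

lemma eq_of_zero (h : CChain a b 0) : a = b := by
  cases h; rfl

lemma trans (h1 : CChain a b m) (h2 : CChain b c n) : CChain a c (m + n) := by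
  induction h1 with
  | refl => simpa using h2
  | step h _ ih =>
    have := CChain.step h (ih h2)
    convert this using 1
    omega

lemma ne_zero_of_lt (h : CChain a b n) (hab : a < b) : n ≠ 0 := by
  rintro rfl
  exact hab.ne h.eq_of_zero

end CChain

section general
variable [CompleteLattice L] [Fintype L]

lemma CChain.hN_add_le {a b : L} {n : ℕ} (h : CChain a b n) : hN a + n ≤ hN b := by
  induction h with
  | refl => simp
  | step h _ ih =>
    have := hN_lt_of_lt h.lt
    omega

lemma finset_exists_minimal' {α : Type*} [Preorder α] (s : Finset α) (h : s.Nonempty) :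
    ∃ m ∈ s, ∀ x ∈ s, ¬x < m := by
  obtain ⟨m, hm⟩ := s.exists_minimal h
  exact ⟨m, hm.prop, fun x hx hlt => hlt.not_ge (hm.2 hx hlt.le)⟩

lemma finset_exists_maximal' {α : Type*} [Preorder α] (s : Finset α) (h : s.Nonempty) :
    ∃ m ∈ s, ∀ x ∈ s, ¬m < x := by
  obtain ⟨m, hm⟩ := s.exists_maximal h
  exact ⟨m, hm.prop, fun x hx hlt => hlt.not_ge (hm.2 hx hlt.le)⟩

lemma exists_covby_of_lt {a b : L} (h : a < b) : ∃ c, a ⋖ c ∧ c ≤ b := by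
  obtain ⟨m, hm, hmin⟩ := finset_exists_minimal'
    (Finset.univ.filter (fun x => a < x ∧ x ≤ b)) ⟨b, by simp [h]⟩
  simp only [Finset.mem_filter, Finset.mem_univ, true_and] at hm hmin
  refine ⟨m, ⟨hm.1, fun d hd hdm => ?_⟩, hm.2⟩
  exact hmin d ⟨hd, hdm.le.trans hm.2⟩ hdm

lemma exists_cchain_aux : ∀ k : ℕ, ∀ a b : L, a ≤ b → hN b - hN a ≤ k → ∃ n, CChain a b n := by
  intro k
  induction k with
  | zero =>
    intro a b hab hk
    rcases eq_or_lt_of_le hab with rfl | h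
    · exact ⟨0, CChain.refl a⟩
    · exact absurd (hN_lt_of_lt h) (by omega)
  | succ k ih =>
    intro a b hab hk
    rcases eq_or_lt_of_le hab with rfl | h
    · exact ⟨0, CChain.refl a⟩
    · obtain ⟨c, hac, hcb⟩ := exists_covby_of_lt h
      have h1 := hN_lt_of_lt hac.lt
      obtain ⟨n, hn⟩ := ih c b hcb (by omega)
      exact ⟨n + 1, CChain.step hac hn⟩

lemma exists_cchain {a b : L} (h : a ≤ b) : ∃ n, CChain a b n :=
  exists_cchain_aux (hN b - hN a) a b h le_rfl

lemma CChain.cases_succ {a b : L} {n : ℕ} (h : CChain a b (n + 1)) :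
    ∃ c, a ⋖ c ∧ CChain c b n := by
  cases h with
  | step h hc => exact ⟨_, h, hc⟩

variable (hL : Semimodular L)
include hL

/-- Jordan–Hölder: any two maximal chains between the same endpoints have equal length. -/
lemma cchain_unique : ∀ m : ℕ, ∀ a b : L, ∀ n, CChain a b m → CChain a b n → m = n := by
  intro m
  induction m using Nat.strong_induction_on with
  | _ m IH =>
    intro a b n hm hn
    match m, hm with
    | 0, hm =>
      obtain rfl := hm.eq_of_zero
      match n, hn with
      | 0, _ => rfl
      | (n' + 1), hn =>
        obtain ⟨d, had, hdb⟩ := hn.cases_succ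
        exact absurd (had.lt.trans_le hdb.le) (lt_irrefl a)
    | (m' + 1), hm =>
      obtain ⟨c, hac, hcb⟩ := hm.cases_succ
      match n, hn with
      | 0, hn =>
        obtain rfl := hn.eq_of_zero
        exact absurd (hac.lt.trans_le hcb.le) (lt_irrefl a)
      | (n' + 1), hn =>
        obtain ⟨d, had, hdb⟩ := hn.cases_succ
        by_cases hcd : c = d
        · subst hcd
          have := IH m' (by omega) c b n' hcb hdb
          omega
        · -- c ≠ d, both cover a; use semimodularity
          have hinf : c ⊓ d = a := by
            rcases hac.eq_or_eq (c := c ⊓ d) (le_inf hac.le had.le) inf_le_left with h | h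
            · exact h
            · -- c ⊓ d = c, so c ≤ d, hence c = d (as a ⋖ d, a < c ≤ d)
              exfalso
              have hcled : c ≤ d := h ▸ inf_le_right
              rcases had.eq_or_eq (c := c) hac.le hcled with h2 | h2
              · exact hac.lt.ne' h2
              · exact hcd h2
          have hde : d ⋖ c ⊔ d := by
            have := hL c d (by rw [hinf]; exact hac)
            exact this
          have hce : c ⋖ c ⊔ d := by
            have := hL d c (by rw [inf_comm, hinf]; exact had)
            rwa [sup_comm] at this
          have heb : c ⊔ d ≤ b := sup_le hcb.le hdb.le
          obtain ⟨l, hE⟩ := exists_cchain heb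
          have hcchain : CChain c b (l + 1) := by
            have := CChain.step hce hE
            convert this using 1
          have h1 : m' = l + 1 := IH m' (by omega) c b (l + 1) hcb hcchain
          have hdchain : CChain d b (l + 1) := CChain.step hde hE
          have h2 : l + 1 = n' := IH (l + 1) (by omega) d b n' hdchain hdb
          omega

/-- Every maximal chain from `⊥` to `b` has length `hN b`. -/
lemma cchain_bot_length {b : L} {n : ℕ} (h : CChain ⊥ b n) : n = hN b := by
  -- lower bound: n ≤ hN b
  have hle : n ≤ hN b := by have := h.hN_add_le; rw [hN_bot] at this; omega
  -- upper bound: hN b ≤ n, via a height-realizing LTSeries refined into covers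
  have hge : hN b ≤ n := by
    obtain ⟨p, hlast, hlen⟩ := Order.exists_series_of_height_eq_coe b (coe_hN b).symm
    -- chain from p.head to p.last of length ≥ p.length
    have key : ∀ (k : ℕ) (q : LTSeries L), q.length = k →
        ∃ M, q.length ≤ M ∧ CChain q.head q.last M := by
      intro k
      induction k with
      | zero =>
        intro q hq
        refine ⟨0, by omega, ?_⟩
        have : q.head = q.last := by
          unfold RelSeries.head RelSeries.last
          congr 1
          omega
        rw [this]
        exact CChain.refl _
      | succ k ih =>
        intro q hq
        have hne : q.length ≠ 0 := by omega
        have h1 : q.eraseLast.length = k := by simp [RelSeries.eraseLast, hq]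
        obtain ⟨M, hM, hchain⟩ := ih q.eraseLast h1
        have hlt : q.eraseLast.last < q.last := q.eraseLast_last_rel_last hne
        obtain ⟨l, hl⟩ := exists_cchain hlt.le
        have hlne : l ≠ 0 := hl.ne_zero_of_lt hlt
        have : CChain q.eraseLast.head q.last (M + l) := hchain.trans hl
        rw [RelSeries.head_eraseLast] at this
        exact ⟨M + l, by omega, this⟩
    obtain ⟨M, hM, hchain⟩ := key p.length p rfl
    obtain ⟨l0, hl0⟩ := exists_cchain (bot_le : (⊥ : L) ≤ p.head)
    have htot : CChain ⊥ b (l0 + M) := by rw [← hlast]; exact hl0.trans hchain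
    have := cchain_unique hL (l0 + M) ⊥ b n htot h
    omega
  omega

/-- Grading: in a finite semimodular lattice, covers increase height by exactly one. -/
lemma hN_covby {a b : L} (h : a ⋖ b) : hN b = hN a + 1 := by
  obtain ⟨k, hk⟩ := exists_cchain (bot_le : (⊥ : L) ≤ a)
  have h1 : k = hN a := cchain_bot_length hL hk
  have h2 : CChain ⊥ b (k + 1) := by
    have : CChain a b (0 + 1) := CChain.step h (CChain.refl b)
    have := hk.trans this
    convert this using 1
  have := cchain_bot_length hL h2
  omega

lemma CChain.length_eq {a b : L} {n : ℕ} (h : CChain a b n) : hN b = hN a + n := by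
  induction h with
  | refl => simp
  | step hc _ ih => rw [ih, hN_covby hL hc]; omega

omit hL in
/-- Exchange: joining a cover with any element gives a cover or equality. -/
lemma exchange (hL : Semimodular L) {a b : L} (hab : a ⋖ b) (c : L) :
    c ⊔ a = c ⊔ b ∨ (c ⊔ a) ⋖ (c ⊔ b) := by
  by_cases hb : b ≤ c ⊔ a
  · left
    exact le_antisymm (sup_le_sup_left hab.le c) (sup_le le_sup_left hb)
  · right
    have hinf : b ⊓ (c ⊔ a) = a := by
      rcases hab.eq_or_eq (c := b ⊓ (c ⊔ a)) (le_inf hab.le le_sup_right) inf_le_left with h | h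
      · exact h
      · exact absurd (h ▸ inf_le_right) hb
    have := hL b (c ⊔ a) (by rw [hinf]; exact hab)
    have heq : b ⊔ (c ⊔ a) = c ⊔ b := by
      rw [sup_comm b, sup_assoc]
      congr 1
      exact sup_eq_right.mpr hab.le
    rwa [heq] at this

lemma hN_sup_cov_le {a b : L} (hab : a ⋖ b) (c : L) : hN (c ⊔ b) ≤ hN (c ⊔ a) + 1 := by
  rcases exchange hL hab c with h | h
  · rw [← h]; omega
  · rw [hN_covby hL h]

lemma hN_sup_cchain_le (x : L) {s c : L} {n : ℕ} (h : CChain s c n) :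
    hN (x ⊔ c) ≤ hN (x ⊔ s) + n := by
  induction h with
  | refl => omega
  | step hc _ ih =>
    have := hN_sup_cov_le hL hc x
    omega

/-- Submodularity of the height function. -/
lemma hN_submodular (x y : L) : hN (x ⊔ y) + hN (x ⊓ y) ≤ hN x + hN y := by
  obtain ⟨k, hk⟩ := exists_cchain (inf_le_right : x ⊓ y ≤ y)
  have hky : hN y = hN (x ⊓ y) + k := hk.length_eq hL
  have := hN_sup_cchain_le hL x hk
  rw [sup_inf_self] at this
  omega

variable (L) in
/-- The type of join-irreducible elements. -/
abbrev JL := {p : L // SupIrred p}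

noncomputable instance : Fintype (JL L) := Fintype.ofFinite _

omit hL

/-- The join-irreducibles below `x`. -/
noncomputable def Jx (x : L) : Finset (JL L) :=
  Finset.univ.filter (fun p => (p : L) ≤ x)

lemma mem_Jx {x : L} {p : JL L} : p ∈ Jx x ↔ (p : L) ≤ x := by
  simp [Jx]

lemma Jx_mono {x y : L} (h : x ≤ y) : Jx x ⊆ Jx (y : L) := by
  intro p hp
  rw [mem_Jx] at hp ⊢
  exact hp.trans h

lemma Jx_inf (x y : L) : Jx (x ⊓ y) = Jx x ∩ Jx y := by
  ext p
  simp [mem_Jx, le_inf_iff]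

lemma sup_Jx (x : L) : (Jx x).sup (fun p => (p : L)) = x := by
  apply le_antisymm
  · exact Finset.sup_le (fun p hp => mem_Jx.mp hp)
  · obtain ⟨s, hs, hirr⟩ := exists_supIrred_decomposition x
    have h2 : s.sup id ≤ (Jx x).sup (fun p : JL L => (p : L)) := by
      apply Finset.sup_le
      intro b hb
      have hbx : b ≤ x := by
        rw [← hs]
        exact Finset.le_sup (f := id) hb
      have hmem : (⟨b, hirr hb⟩ : JL L) ∈ Jx x := mem_Jx.mpr hbx
      exact Finset.le_sup (f := fun p : JL L => (p : L)) hmem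
    rwa [hs] at h2

lemma Jx_bot : Jx (⊥ : L) = ∅ := by
  ext p
  simp only [mem_Jx, le_bot_iff, Finset.notMem_empty, iff_false]
  exact fun h => p.2.ne_bot h

lemma Jx_top : Jx (⊤ : L) = Finset.univ := by
  ext p; simp [mem_Jx]

/-- The matroid rank function. -/
noncomputable def rk (A : Finset (JL L)) : ℕ :=
  Finset.univ.inf' ⟨⊥, Finset.mem_univ ⊥⟩ (fun z : L => hN z + (A \ Jx z).card)

lemma rk_le (A : Finset (JL L)) (z : L) : rk A ≤ hN z + (A \ Jx z).card :=
  Finset.inf'_le _ (Finset.mem_univ z)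

lemma exists_rk_eq (A : Finset (JL L)) : ∃ z : L, rk A = hN z + (A \ Jx z).card := by
  obtain ⟨z, _, hz⟩ := Finset.exists_mem_eq_inf' (s := (Finset.univ : Finset L))
    ⟨⊥, Finset.mem_univ ⊥⟩ (fun z : L => hN z + (A \ Jx z).card)
  exact ⟨z, hz⟩

lemma le_rk (A : Finset (JL L)) {n : ℕ}
    (h : ∀ z : L, n ≤ hN z + (A \ Jx z).card) : n ≤ rk A := by
  obtain ⟨z, hz⟩ := exists_rk_eq A
  rw [hz]; exact h z

lemma rk_empty : rk (∅ : Finset (JL L)) = 0 := by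
  have h1 := rk_le (∅ : Finset (JL L)) ⊥
  simp [hN_bot] at h1
  omega

lemma rk_mono {A B : Finset (JL L)} (h : A ⊆ B) : rk A ≤ rk B := by
  obtain ⟨z, hz⟩ := exists_rk_eq B
  rw [hz]
  exact (rk_le A z).trans (by
    gcongr)

lemma rk_insert_le (A : Finset (JL L)) (q : JL L) : rk (insert q A) ≤ rk A + 1 := by
  obtain ⟨z, hz⟩ := exists_rk_eq A
  refine (rk_le _ z).trans ?_
  rw [hz]
  have : (insert q A \ Jx z).card ≤ (A \ Jx z).card + 1 := by
    refine le_trans (Finset.card_le_card (t := insert q (A \ Jx z)) ?_) (Finset.card_insert_le _ _)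
    intro p hp
    simp only [Finset.mem_sdiff, Finset.mem_insert] at hp ⊢
    tauto
  omega

lemma rk_singleton (q : JL L) : rk ({q} : Finset (JL L)) = 1 := by
  apply le_antisymm
  · have := rk_le ({q} : Finset (JL L)) ⊥
    rw [Jx_bot, Finset.sdiff_empty, hN_bot, Finset.card_singleton] at this
    omega
  · apply le_rk
    intro z
    by_cases hqz : (q : L) ≤ z
    · have h1 : (1 : ℕ) ≤ hN z := one_le_hN_of_ne_bot (fun h => q.2.ne_bot (le_bot_iff.mp (h ▸ hqz)))
      omega
    · have hd : ({q} : Finset (JL L)) \ Jx z = {q} :=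
        Finset.sdiff_eq_self_of_disjoint (Finset.disjoint_singleton_left.mpr (by simp [mem_Jx, hqz]))
      rw [hd]
      simp

lemma rk_pair {p q : JL L} (h : p ≠ q) : 2 ≤ rk ({p, q} : Finset (JL L)) := by
  apply le_rk
  intro z
  have hpbot : (p : L) ≠ ⊥ := p.2.ne_bot
  have hqbot : (q : L) ≠ ⊥ := q.2.ne_bot
  have hcoe : (p : L) ≠ (q : L) := fun hh => h (Subtype.ext hh)
  by_cases hp : (p : L) ≤ z <;> by_cases hq : (q : L) ≤ z
  · -- both below z : hN z ≥ 2
    have h2 : 2 ≤ hN z := by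
      have hbp := hN_lt_of_lt (show (⊥ : L) < (p : L) from bot_lt_iff_ne_bot.mpr hpbot)
      have hbq := hN_lt_of_lt (show (⊥ : L) < (q : L) from bot_lt_iff_ne_bot.mpr hqbot)
      rw [hN_bot] at hbp hbq
      by_cases hle : (p : L) ≤ (q : L)
      · have := hN_lt_of_lt (lt_of_le_of_ne hle hcoe)
        have := hN_mono hq
        omega
      · have h1 : (q : L) < (p : L) ⊔ (q : L) := lt_of_le_of_ne le_sup_right (by
          intro hh
          exact hle (le_trans le_sup_left hh.ge))
        have := hN_lt_of_lt h1
        have := hN_mono (sup_le hp hq)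
        omega
    omega
  · have hcard : 1 ≤ (({p, q} : Finset (JL L)) \ Jx z).card := by
      refine Finset.card_pos.mpr ⟨q, ?_⟩
      simp [Finset.mem_sdiff, mem_Jx, hq]
    have h1 : (1 : ℕ) ≤ hN z := one_le_hN_of_ne_bot (fun hh => hpbot (le_bot_iff.mp (hh ▸ hp)))
    omega
  · have hcard : 1 ≤ (({p, q} : Finset (JL L)) \ Jx z).card := by
      refine Finset.card_pos.mpr ⟨p, ?_⟩
      simp [Finset.mem_sdiff, mem_Jx, hp]
    have h1 : (1 : ℕ) ≤ hN z := one_le_hN_of_ne_bot (fun hh => hqbot (le_bot_iff.mp (hh ▸ hq)))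
    omega
  · have hd : ({p, q} : Finset (JL L)) \ Jx z = {p, q} := by
      refine Finset.sdiff_eq_self_of_disjoint (Finset.disjoint_left.mpr ?_)
      intro x hx
      simp only [Finset.mem_insert, Finset.mem_singleton] at hx
      rcases hx with rfl | rfl <;> simp [mem_Jx, hp, hq]
    rw [hd, Finset.card_pair h]
    omega

/-- A join-irreducible element has a unique lower cover, dominating all strictly
smaller elements. -/
lemma supIrred_lower_cover {p : L} (hp : SupIrred p) :
    ∃ u, u ⋖ p ∧ ∀ x, x < p → x ≤ u := by
  have hpbot : (⊥ : L) < p := bot_lt_iff_ne_bot.mpr hp.ne_bot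
  obtain ⟨u, hu, humax⟩ := finset_exists_maximal'
    (Finset.univ.filter (fun x => x < p)) ⟨⊥, by simp [hpbot]⟩
  simp only [Finset.mem_filter, Finset.mem_univ, true_and] at hu humax
  have hdom : ∀ x, x < p → x ≤ u := by
    intro x hx
    have hxu : x ⊔ u ≤ p := sup_le hx.le hu.le
    have hne : x ⊔ u ≠ p := by
      intro hh
      rcases hp.2 hh with h1 | h1
      · exact hx.ne h1
      · exact hu.ne h1
    have : x ⊔ u < p := lt_of_le_of_ne hxu hne
    have := humax _ this
    have h2 : ¬ u < x ⊔ u := this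
    rcases eq_or_lt_of_le (le_sup_right : u ≤ x ⊔ u) with h3 | h3
    · exact le_trans le_sup_left h3.ge
    · exact absurd h3 h2
  refine ⟨u, ⟨hu, fun d hud hdp => ?_⟩, hdom⟩
  exact hud.not_ge (hdom d hdp)

/-- Down-closed subsets of `JL`. -/
def DownClosed (A : Finset (JL L)) : Prop :=
  ∀ p ∈ A, ∀ q : JL L, (q : L) ≤ (p : L) → q ∈ A

lemma downClosed_Jx (x : L) : DownClosed (Jx x) := by
  intro p hp q hq
  rw [mem_Jx] at hp ⊢
  exact hq.trans hp

lemma downClosed_union {A B : Finset (JL L)} (hA : DownClosed A) (hB : DownClosed B) :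
    DownClosed (A ∪ B) := by
  intro p hp q hq
  rw [Finset.mem_union] at hp ⊢
  rcases hp with h | h
  exacts [Or.inl (hA p h q hq), Or.inr (hB p h q hq)]

variable (hL : Semimodular L)
include hL

/-- The key lemma: for a down-closed set `A` of join-irreducibles and any `z`,
`hN (z ⊔ sup A) ≤ hN z + |A \ Jx z|`. -/
lemma key_lemma {A : Finset (JL L)} (hA : DownClosed A) :
    ∀ z : L, hN (z ⊔ A.sup (fun p => (p : L))) ≤ hN z + (A \ Jx z).card := by
  have main : ∀ (k : ℕ) (z : L), (A \ Jx z).card = k →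
      hN (z ⊔ A.sup (fun p => (p : L))) ≤ hN z + (A \ Jx z).card := by
    intro k
    induction k using Nat.strong_induction_on with
    | _ k IH =>
      intro z hcard
      by_cases hempty : A \ Jx z = ∅
      · -- A ⊆ Jx z, so sup A ≤ z
        have hsub : A ⊆ Jx z := by
          intro p hp
          by_contra hnp
          exact (Finset.eq_empty_iff_forall_notMem.mp hempty p)
            (Finset.mem_sdiff.mpr ⟨hp, hnp⟩)
        have hsup : A.sup (fun p => (p : L)) ≤ z :=
          Finset.sup_le (fun p hp => mem_Jx.mp (hsub hp))
        rw [sup_of_le_left hsup]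
        omega
      · -- pick a minimal element p of A \ Jx z
        obtain ⟨p, hpmem, hpmin⟩ := finset_exists_minimal' _
          (Finset.nonempty_iff_ne_empty.mpr hempty)
        rw [Finset.mem_sdiff] at hpmem
        obtain ⟨hpA, hpz⟩ := hpmem
        rw [mem_Jx] at hpz
        -- its lower cover u satisfies u ≤ z
        obtain ⟨u, hucov, hudom⟩ := supIrred_lower_cover (p := (p : L)) p.2
        have huz : u ≤ z := by
          by_contra hnuz
          -- some join-irreducible below u is not below z
          obtain ⟨s, hs, hirr⟩ := exists_supIrred_decomposition u
          have : ∃ b ∈ s, ¬ b ≤ z := by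
            by_contra hall
            push_neg at hall
            exact hnuz (by rw [← hs]; exact Finset.sup_le hall)
          obtain ⟨b, hbs, hbz⟩ := this
          have hbu : b ≤ u := by rw [← hs]; exact Finset.le_sup (f := id) hbs
          set q : JL L := ⟨b, hirr hbs⟩
          have hqA : q ∈ A := hA p hpA q (hbu.trans hucov.le)
          have hqmem : q ∈ A \ Jx z := Finset.mem_sdiff.mpr ⟨hqA, by
            rw [mem_Jx]; exact hbz⟩
          have hqp : q < p := by
            refine lt_of_le_of_ne (Subtype.coe_le_coe.mp (hbu.trans hucov.le)) ?_
            intro hh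
            subst hh
            exact (lt_irrefl (q : L)) ((hbu.trans_lt hucov.lt))
          exact hpmin q hqmem hqp
        -- z ⊓ p = u, hence z ⋖ z ⊔ p by semimodularity
        have hinf : (p : L) ⊓ z = u := by
          apply le_antisymm
          · exact hudom _ (lt_of_le_of_ne inf_le_left (fun hh => hpz (hh ▸ inf_le_right)))
          · exact le_inf hucov.le huz
        have hcov : z ⋖ z ⊔ (p : L) := by
          have := hL (p : L) z (by rw [hinf]; exact hucov)
          rwa [sup_comm] at this
        set z' := z ⊔ (p : L) with hz'
        have hJsub : A \ Jx z' ⊆ (A \ Jx z).erase p := by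
          intro q hq
          rw [Finset.mem_sdiff] at hq
          rw [Finset.mem_erase, Finset.mem_sdiff]
          refine ⟨?_, hq.1, fun hqz => hq.2 (Jx_mono le_sup_left hqz)⟩
          intro hh
          subst hh
          exact hq.2 (mem_Jx.mpr le_sup_right)
        have hcard' : (A \ Jx z').card < k := by
          calc (A \ Jx z').card ≤ ((A \ Jx z).erase p).card := Finset.card_le_card hJsub
          _ < (A \ Jx z).card := by
              rw [Finset.card_erase_of_mem (Finset.mem_sdiff.mpr ⟨hpA, fun hh => hpz (mem_Jx.mp hh)⟩)]
              have : 0 < (A \ Jx z).card := Finset.card_pos.mpr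
                ⟨p, Finset.mem_sdiff.mpr ⟨hpA, fun hh => hpz (mem_Jx.mp hh)⟩⟩
              omega
          _ = k := hcard
        have hIH := IH _ hcard' z' rfl
        have hsupz : z' ⊔ A.sup (fun p => (p : L)) = z ⊔ A.sup (fun p => (p : L)) := by
          rw [hz', sup_assoc]
          congr 1
          exact sup_eq_right.mpr (Finset.le_sup (f := fun p : JL L => (p : L)) hpA)
        have hhz' : hN z' = hN z + 1 := hN_covby hL hcov
        rw [hsupz] at hIH
        omega
  intro z
  exact main _ z rfl

/-- Submodularity of the rank function. -/
lemma rk_submodular (A B : Finset (JL L)) :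
    rk (A ∪ B) + rk (A ∩ B) ≤ rk A + rk B := by
  obtain ⟨z₁, hz₁⟩ := exists_rk_eq A
  obtain ⟨z₂, hz₂⟩ := exists_rk_eq B
  have h1 := rk_le (A ∪ B) (z₁ ⊔ z₂)
  have h2 := rk_le (A ∩ B) (z₁ ⊓ z₂)
  have hsub := hN_submodular hL z₁ z₂
  -- counting inequality
  set X := (A ∪ B) \ Jx (z₁ ⊔ z₂)
  set Y := (A ∩ B) \ Jx (z₁ ⊓ z₂)
  set S₁ := A \ Jx z₁
  set S₂ := B \ Jx z₂
  have hXY : X.card + Y.card ≤ S₁.card + S₂.card := by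
    have hXsub : X ∪ Y ⊆ S₁ ∪ S₂ := by
      intro e he
      rw [Finset.mem_union] at he
      have h1' : e ∉ Jx z₁ → e ∈ A → e ∈ S₁ := fun h he => Finset.mem_sdiff.mpr ⟨he, h⟩
      have h2' : e ∉ Jx z₂ → e ∈ B → e ∈ S₂ := fun h he => Finset.mem_sdiff.mpr ⟨he, h⟩
      rw [Finset.mem_union]
      rcases he with he | he
      · rw [Finset.mem_sdiff, Finset.mem_union] at he
        obtain ⟨hab, hz⟩ := he
        have hnz₁ : e ∉ Jx z₁ ∨ e ∉ Jx z₂ → True := fun _ => trivial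
        have he₁ : e ∉ Jx z₁ := fun hh => hz (Jx_mono le_sup_left hh)
        have he₂ : e ∉ Jx z₂ := fun hh => hz (Jx_mono le_sup_right hh)
        rcases hab with h | h
        exacts [Or.inl (h1' he₁ h), Or.inr (h2' he₂ h)]
      · rw [Finset.mem_sdiff, Finset.mem_inter, Jx_inf, Finset.mem_inter] at he
        obtain ⟨⟨heA, heB⟩, hz⟩ := he
        by_cases he₁ : e ∈ Jx z₁
        · exact Or.inr (h2' (fun hh => hz ⟨he₁, hh⟩) heB)
        · exact Or.inl (h1' he₁ heA)
    have hXinter : X ∩ Y ⊆ S₁ ∩ S₂ := by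
      intro e he
      rw [Finset.mem_inter] at he
      obtain ⟨heX, heY⟩ := he
      rw [Finset.mem_sdiff, Finset.mem_union] at heX
      rw [Finset.mem_sdiff, Finset.mem_inter] at heY
      have he₁ : e ∉ Jx z₁ := fun hh => heX.2 (Jx_mono le_sup_left hh)
      have he₂ : e ∉ Jx z₂ := fun hh => heX.2 (Jx_mono le_sup_right hh)
      rw [Finset.mem_inter, Finset.mem_sdiff, Finset.mem_sdiff]
      exact ⟨⟨heY.1.1, he₁⟩, ⟨heY.1.2, he₂⟩⟩
    have e1 : X.card + Y.card = (X ∪ Y).card + (X ∩ Y).card :=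
      (Finset.card_union_add_card_inter X Y).symm
    have e2 : S₁.card + S₂.card = (S₁ ∪ S₂).card + (S₁ ∩ S₂).card :=
      (Finset.card_union_add_card_inter S₁ S₂).symm
    rw [e1, e2]
    exact Nat.add_le_add (Finset.card_le_card hXsub) (Finset.card_le_card hXinter)
  omega

lemma rk_insert_of_subset {X Y : Finset (JL L)} (q : JL L) (hXY : X ⊆ Y)
    (h : rk (insert q X) = rk X) : rk (insert q Y) = rk Y := by
  have hsub := rk_submodular hL Y (insert q X)
  have h1 : Y ∪ insert q X = insert q Y := by
    ext e
    simp only [Finset.mem_union, Finset.mem_insert]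
    constructor
    · rintro (h | h | h)
      exacts [Or.inr h, Or.inl h, Or.inr (hXY h)]
    · rintro (h | h)
      exacts [Or.inr (Or.inl h), Or.inl h]
  have h2 : X ⊆ Y ∩ insert q X := by
    intro e he
    exact Finset.mem_inter.mpr ⟨hXY he, Finset.mem_insert_of_mem he⟩
  have h3 := rk_mono h2
  rw [h1, h] at hsub
  have h4 := rk_mono (Finset.subset_insert q Y)
  omega

lemma rk_union_eq {X S : Finset (JL L)} (h : ∀ q ∈ S, rk (insert q X) = rk X) :
    rk (X ∪ S) = rk X := by
  induction S using Finset.induction_on with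
  | empty => rw [Finset.union_empty]
  | insert _ _ hq ih =>
    rename_i a S'
    have h1 : X ∪ insert a S' = insert a (X ∪ S') := by
      ext e
      simp only [Finset.mem_union, Finset.mem_insert]
      tauto
    rw [h1]
    have h2 := ih (fun q hqS => h q (Finset.mem_insert_of_mem hqS))
    have h3 := rk_insert_of_subset hL a (Finset.subset_union_left (s₁ := X) (s₂ := S'))
      (h a (Finset.mem_insert_self a S'))
    rw [h3, h2]

/-- The closure of a set of join-irreducibles. -/
noncomputable def cl (X : Finset (JL L)) : Finset (JL L) :=
  Finset.univ.filter (fun q => q ∈ X ∨ rk (insert q X) = rk X)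

omit hL in
lemma subset_cl (X : Finset (JL L)) : X ⊆ cl X := by
  intro q hq
  simp [cl, hq]

omit hL in
lemma mem_cl {X : Finset (JL L)} {q : JL L} :
    q ∈ cl X ↔ q ∈ X ∨ rk (insert q X) = rk X := by
  simp [cl]

lemma rk_cl (X : Finset (JL L)) : rk (cl X) = rk X := by
  have h1 : X ∪ cl X = cl X := Finset.union_eq_right.mpr (subset_cl X)
  rw [← h1]
  apply rk_union_eq hL
  intro q hq
  rcases mem_cl.mp hq with h | h
  · rw [Finset.insert_eq_self.mpr h]
  · exact h

/-- A flat is a closed set. -/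
def IsFlat (A : Finset (JL L)) : Prop := ∀ q : JL L, q ∉ A → rk A < rk (insert q A)

omit hL in
lemma IsFlat.rk_lt_of_ssubset {A B : Finset (JL L)} (hA : IsFlat A) (h : A ⊂ B) :
    rk A < rk B := by
  obtain ⟨q, hqB, hqA⟩ := Finset.exists_of_ssubset h
  exact lt_of_lt_of_le (hA q hqA) (rk_mono (Finset.insert_subset hqB h.subset))

lemma isFlat_of_subset_flat {A X : Finset (JL L)} (hA : IsFlat A) (hXA : X ⊆ A) :
    ∀ q : JL L, q ∉ A → rk X < rk (insert q X) := by
  intro q hq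
  rcases lt_or_ge (rk X) (rk (insert q X)) with h | h
  · exact h
  · exfalso
    have heq : rk (insert q X) = rk X := le_antisymm h (rk_mono (Finset.subset_insert q X))
    have := rk_insert_of_subset hL q hXA heq
    exact absurd this (Nat.ne_of_lt (hA q hq)).symm

lemma isFlat_cl (X : Finset (JL L)) : IsFlat (cl X) := by
  intro q hq
  rcases lt_or_ge (rk (cl X)) (rk (insert q (cl X))) with h | h
  · exact h
  · exfalso
    have heq : rk (insert q (cl X)) = rk (cl X) :=
      le_antisymm h (rk_mono (Finset.subset_insert q (cl X)))
    have h1 : rk (insert q X) = rk X := by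
      have hle : rk (insert q X) ≤ rk (insert q (cl X)) :=
        rk_mono (Finset.insert_subset_insert q (subset_cl X))
      have := rk_cl hL X
      have h2 : rk X ≤ rk (insert q X) := rk_mono (Finset.subset_insert q X)
      omega
    exact hq (mem_cl.mpr (Or.inr h1))

lemma cl_subset_flat {X A : Finset (JL L)} (hA : IsFlat A) (hXA : X ⊆ A) : cl X ⊆ A := by
  intro q hq
  by_contra hqA
  rcases mem_cl.mp hq with h | h
  · exact hqA (hXA h)
  · exact absurd h.symm (Nat.ne_of_lt (isFlat_of_subset_flat hL hA hXA q hqA))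

omit hL in
lemma isFlat_univ : IsFlat (Finset.univ : Finset (JL L)) := by
  intro q hq
  exact absurd (Finset.mem_univ q) hq

omit hL in
lemma isFlat_empty : IsFlat (∅ : Finset (JL L)) := by
  intro q _
  have : insert q (∅ : Finset (JL L)) = {q} := rfl
  rw [rk_empty, this, rk_singleton]
  omega

omit hL in
lemma isFlat_singleton (q : JL L) : IsFlat ({q} : Finset (JL L)) := by
  intro p hp
  rw [rk_singleton]
  have : insert p ({q} : Finset (JL L)) = {p, q} := rfl
  rw [this]
  have := rk_pair (p := p) (q := q) (by simpa using hp)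
  omega

lemma isFlat_Jx (x : L) : IsFlat (Jx x) := by
  intro q hq
  rw [mem_Jx] at hq
  have hrkJx : rk (Jx x) = hN x := by
    apply le_antisymm
    · have := rk_le (Jx x) x
      simp at this
      convert this using 1
    · apply le_rk
      intro z
      have hk := key_lemma hL (downClosed_Jx x) z
      rw [sup_Jx] at hk
      have := hN_mono (le_sup_right : x ≤ z ⊔ x)
      omega
  rw [hrkJx]
  apply lt_of_lt_of_le (Nat.lt_succ_self _)
  apply le_rk
  intro z
  by_cases hqz : (q : L) ≤ z
  · -- q ∈ Jx z
    have hins : insert q (Jx x) \ Jx z = Jx x \ Jx z := by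
      ext e
      simp only [Finset.mem_sdiff, Finset.mem_insert]
      constructor
      · rintro ⟨h | h, h2⟩
        · exact absurd (h ▸ mem_Jx.mpr hqz) h2
        · exact ⟨h, h2⟩
      · rintro ⟨h, h2⟩
        exact ⟨Or.inr h, h2⟩
    rw [hins]
    have hk := key_lemma hL (downClosed_Jx x) z
    rw [sup_Jx] at hk
    have hlt : x < z ⊔ x := by
      refine lt_of_le_of_ne le_sup_right ?_
      intro hh
      exact hq (hqz.trans (le_trans le_sup_left hh.symm.le))
    have := hN_lt_of_lt hlt
    omega
  · -- q ∉ Jx z : the difference gains an element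
    have hins : insert q (Jx x) \ Jx z = insert q (Jx x \ Jx z) := by
      ext e
      simp only [Finset.mem_sdiff, Finset.mem_insert]
      constructor
      · rintro ⟨h | h, h2⟩
        exacts [Or.inl h, Or.inr ⟨h, h2⟩]
      · rintro (rfl | ⟨h, h2⟩)
        exacts [⟨Or.inl rfl, fun hh => hqz (mem_Jx.mp hh)⟩, ⟨Or.inr h, h2⟩]
    rw [hins, Finset.card_insert_of_notMem (by
      rw [Finset.mem_sdiff, mem_Jx]
      exact fun hh => hq hh.1)]
    have hk := key_lemma hL (downClosed_Jx x) z
    rw [sup_Jx] at hk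
    have := hN_mono (le_sup_right : x ≤ z ⊔ x)
    omega

lemma rk_Jx (x : L) : rk (Jx x) = hN x := by
  apply le_antisymm
  · have := rk_le (Jx x) x
    simp at this
    convert this using 1
  · apply le_rk
    intro z
    have hk := key_lemma hL (downClosed_Jx x) z
    rw [sup_Jx] at hk
    have := hN_mono (le_sup_right : x ≤ z ⊔ x)
    omega

end general

variable (L) in
/-- The geometric lattice: flats of the matroid. -/
abbrev K [CompleteLattice L] [Fintype L] := {A : Finset (JL L) // IsFlat A}

section Klattice
variable [CompleteLattice L] [Fintype L] [hsm : Fact (Semimodular L)]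

noncomputable instance : Fintype (K L) := Fintype.ofFinite _

lemma K_le_iff {A B : K L} : A ≤ B ↔ A.1 ⊆ B.1 := Iff.rfl

lemma isFlat_sInf (S : Set (K L)) :
    IsFlat (Finset.univ.filter (fun q => ∀ A ∈ S, q ∈ A.1) : Finset (JL L)) := by
  intro q hq
  simp only [Finset.mem_filter, Finset.mem_univ, true_and, not_forall] at hq
  obtain ⟨A, hAS, hqA⟩ := hq
  have hsub : (Finset.univ.filter (fun q => ∀ A ∈ S, q ∈ A.1) : Finset (JL L)) ⊆ A.1 := by
    intro e he
    simp only [Finset.mem_filter, Finset.mem_univ, true_and] at he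
    exact he A hAS
  exact isFlat_of_subset_flat hsm.out A.2 hsub q (by tauto)

noncomputable instance : InfSet (K L) :=
  ⟨fun S => ⟨Finset.univ.filter (fun q => ∀ A ∈ S, q ∈ A.1), isFlat_sInf S⟩⟩

noncomputable instance : CompleteLattice (K L) := by
  apply completeLatticeOfInf
  intro S
  constructor
  · intro A hAS
    rw [K_le_iff]
    intro q hq
    simp only [sInf, Finset.mem_filter, Finset.mem_univ, true_and] at hq
    exact hq A hAS
  · intro B hB
    rw [K_le_iff]
    intro q hq
    simp only [sInf, Finset.mem_filter, Finset.mem_univ, true_and]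
    intro A hAS
    exact hB hAS hq

lemma K_bot_val : (⊥ : K L).1 = ∅ := by
  have h : (⟨∅, isFlat_empty⟩ : K L) ≤ ⊥ := by
    rw [K_le_iff]
    exact fun q hq => absurd hq (Finset.notMem_empty q)
  have h2 : (⊥ : K L) ≤ ⟨∅, isFlat_empty⟩ := bot_le
  have := le_antisymm h h2
  rw [← this]

lemma K_top_val : (⊤ : K L).1 = Finset.univ := by
  have h : (⊤ : K L) ≤ ⟨Finset.univ, isFlat_univ⟩ := by
    rw [K_le_iff]
    exact fun q _ => Finset.mem_univ q
  have h2 : (⟨Finset.univ, isFlat_univ⟩ : K L) ≤ ⊤ := le_top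
  have := le_antisymm h h2
  rw [this]

lemma K_inf_val (A B : K L) : (A ⊓ B).1 = A.1 ∩ B.1 := by
  have hflat : IsFlat (A.1 ∩ B.1) := by
    intro q hq
    rw [Finset.mem_inter, not_and_or] at hq
    rcases hq with h | h
    · exact isFlat_of_subset_flat hsm.out A.2 (Finset.inter_subset_left) q h
    · exact isFlat_of_subset_flat hsm.out B.2 (Finset.inter_subset_right) q h
  apply le_antisymm
  · intro q hq
    exact Finset.mem_inter.mpr ⟨K_le_iff.mp inf_le_left hq, K_le_iff.mp inf_le_right hq⟩
  · have h : (⟨A.1 ∩ B.1, hflat⟩ : K L) ≤ A ⊓ B :=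
      le_inf (K_le_iff.mpr Finset.inter_subset_left) (K_le_iff.mpr Finset.inter_subset_right)
    exact K_le_iff.mp h

lemma K_sup_val (A B : K L) : (A ⊔ B).1 = cl (A.1 ∪ B.1) := by
  apply le_antisymm
  · have h : A ⊔ B ≤ ⟨cl (A.1 ∪ B.1), isFlat_cl hsm.out _⟩ := by
      apply sup_le
      · exact K_le_iff.mpr ((Finset.subset_union_left).trans (subset_cl _))
      · exact K_le_iff.mpr ((Finset.subset_union_right).trans (subset_cl _))
    exact K_le_iff.mp h
  · apply cl_subset_flat hsm.out (A ⊔ B).2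
    exact Finset.union_subset (K_le_iff.mp le_sup_left) (K_le_iff.mp le_sup_right)

lemma K_lt_iff {A B : K L} : A < B ↔ A.1 ⊂ B.1 := by
  rw [lt_iff_le_and_ne, Finset.ssubset_iff_subset_ne, K_le_iff]
  constructor
  · rintro ⟨h1, h2⟩
    exact ⟨h1, fun hh => h2 (Subtype.ext hh)⟩
  · rintro ⟨h1, h2⟩
    exact ⟨h1, fun hh => h2 (congrArg Subtype.val hh)⟩

/-- Rank increases strictly along flats. -/
lemma K_rk_strictMono : StrictMono (fun A : K L => rk A.1) := by
  intro A B h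
  exact A.2.rk_lt_of_ssubset (K_lt_iff.mp h)

/-- Covers in `K` increase rank by exactly one. -/
lemma K_rk_covby {A B : K L} (h : A ⋖ B) : rk B.1 = rk A.1 + 1 := by
  have hlt := K_rk_strictMono h.lt
  simp only at hlt
  have hle : rk B.1 ≤ rk A.1 + 1 := by
    obtain ⟨q, hqB, hqA⟩ := Finset.exists_of_ssubset (K_lt_iff.mp h.lt)
    set C : K L := ⟨cl (insert q A.1), isFlat_cl hsm.out _⟩ with hC
    have hAC : A < C := by
      rw [K_lt_iff]
      refine Finset.ssubset_iff_subset_ne.mpr ⟨(Finset.subset_insert q A.1).trans (subset_cl _), ?_⟩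
      intro hh
      exact hqA (hh ▸ subset_cl _ (Finset.mem_insert_self q A.1))
    have hCB : C ≤ B := by
      rw [K_le_iff]
      exact cl_subset_flat hsm.out B.2 (Finset.insert_subset hqB (K_le_iff.mp h.le))
    have hCeqB : C = B := by
      rcases eq_or_lt_of_le hCB with h1 | h1
      · exact h1
      · exact absurd h1 (h.2 hAC)
    rw [← hCeqB]
    have h1 : rk C.1 = rk (insert q A.1) := rk_cl hsm.out _
    rw [h1]
    exact rk_insert_le _ _
  omega

/-- Submodularity in `K`. -/
lemma K_rk_submodular (A B : K L) :
    rk (A ⊔ B).1 + rk (A ⊓ B).1 ≤ rk A.1 + rk B.1 := by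
  rw [K_sup_val, K_inf_val, rk_cl hsm.out]
  exact rk_submodular hsm.out A.1 B.1

theorem K_semimodular : Semimodular (K L) := by
  intro A B h
  have hBsup : B < A ⊔ B := by
    rcases eq_or_lt_of_le (le_sup_right : B ≤ A ⊔ B) with h1 | h1
    · exfalso
      have hAB : A ≤ B := le_trans le_sup_left h1.symm.le
      rw [inf_eq_left.mpr hAB] at h
      exact lt_irrefl A h.lt
    · exact h1
  refine ⟨hBsup, ?_⟩
  intro C hBC hCAB
  have h1 := K_rk_submodular A B
  have h2 : rk A.1 = rk (A ⊓ B).1 + 1 := K_rk_covby h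
  have h3 := K_rk_strictMono hBC
  have h4 := K_rk_strictMono hCAB
  simp only at h3 h4
  omega

lemma K_atom_singleton (q : JL L) : IsAtom (⟨{q}, isFlat_singleton q⟩ : K L) := by
  constructor
  · intro hh
    have := congrArg Subtype.val hh
    rw [K_bot_val] at this
    simp at this
  · intro B hB
    have hsub := K_lt_iff.mp hB
    apply Subtype.ext
    rw [K_bot_val]
    rcases Finset.eq_empty_or_nonempty B.1 with h | ⟨x, hx⟩
    · exact h
    · exfalso
      have hxq : x = q := by
        have := hsub.subset hx
        simpa using this
      subst hxq
      exact hsub.not_subset (Finset.singleton_subset_iff.mpr hx)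

lemma K_atom_iff {A : K L} : IsAtom A ↔ ∃ q : JL L, A = ⟨{q}, isFlat_singleton q⟩ := by
  constructor
  · intro hA
    have hne : A.1 ≠ ∅ := by
      intro hh
      exact hA.1 (Subtype.ext (by rw [K_bot_val, hh]))
    obtain ⟨q, hq⟩ := Finset.nonempty_iff_ne_empty.mpr hne
    refine ⟨q, ?_⟩
    have hle : (⟨{q}, isFlat_singleton q⟩ : K L) ≤ A :=
      K_le_iff.mpr (Finset.singleton_subset_iff.mpr hq)
    rcases eq_or_lt_of_le hle with h | h
    · exact h.symm
    · exfalso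
      have := hA.2 _ h
      have h2 := congrArg Subtype.val this
      rw [K_bot_val] at h2
      simp at h2
  · rintro ⟨q, rfl⟩
    exact K_atom_singleton q

lemma supIrred_finset_sup_mem {α : Type*} [SemilatticeSup α] [OrderBot α] {a : α}
    {ι : Type*} {s : Finset ι} {f : ι → α} (ha : SupIrred a) (h : s.sup f = a) :
    ∃ i ∈ s, f i = a :=
  ha.finset_sup_eq h

/-- `K` is geometric: nonzero join-irreducibles are atoms. -/
theorem K_geometric : ∀ A : K L, SupIrred A → IsAtom A := by
  intro A hA
  have hne : A.1 ≠ ∅ := by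
    intro hh
    exact hA.1 (by
      intro B hB
      have : A = ⊥ := Subtype.ext (by rw [K_bot_val, hh])
      rw [this]
      exact bot_le)
  -- A is the sup of the atoms below it
  have hsup : A.1.attach.sup (fun q => (⟨{q.1}, isFlat_singleton q.1⟩ : K L)) = A := by
    apply le_antisymm
    · apply Finset.sup_le
      intro q _
      exact K_le_iff.mpr (Finset.singleton_subset_iff.mpr q.2)
    · rw [K_le_iff]
      intro q hq
      have hmem : (⟨q, hq⟩ : {x // x ∈ A.1}) ∈ A.1.attach := Finset.mem_attach _ _
      have := Finset.le_sup (f := fun q : {x // x ∈ A.1} =>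
        (⟨{q.1}, isFlat_singleton q.1⟩ : K L)) hmem
      exact K_le_iff.mp this (Finset.mem_singleton_self q)
  obtain ⟨i, _, hi⟩ := hA.finset_sup_eq hsup
  rw [← hi]
  exact K_atom_singleton i.1

/-- The canonical embedding of `L` into `K L`. -/
noncomputable def phi : LatticeHom L (K L) where
  toFun x := ⟨Jx x, isFlat_Jx hsm.out x⟩
  map_sup' x y := by
    apply Subtype.ext
    show Jx (x ⊔ y) = _
    rw [K_sup_val]
    have hdc : DownClosed (Jx x ∪ Jx y) := downClosed_union (downClosed_Jx x) (downClosed_Jx y)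
    have hsub : cl (Jx x ∪ Jx y) ⊆ Jx (x ⊔ y) := by
      apply cl_subset_flat hsm.out (isFlat_Jx hsm.out (x ⊔ y))
      exact Finset.union_subset (Jx_mono le_sup_left) (Jx_mono le_sup_right)
    have hrk : hN (x ⊔ y) ≤ rk (cl (Jx x ∪ Jx y)) := by
      rw [rk_cl hsm.out]
      apply le_rk
      intro z
      have hk := key_lemma hsm.out hdc z
      have hs : (Jx x ∪ Jx y).sup (fun p => (p : L)) = x ⊔ y := by
        rw [Finset.sup_union, sup_Jx, sup_Jx]
      rw [hs] at hk
      have := hN_mono (le_sup_right : x ⊔ y ≤ z ⊔ (x ⊔ y))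
      omega
    -- cl(Jx x ∪ Jx y) is a flat contained in Jx (x⊔y) with ≥ rank, so equal
    by_contra hne
    have hss : cl (Jx x ∪ Jx y) ⊂ Jx (x ⊔ y) :=
      Finset.ssubset_iff_subset_ne.mpr ⟨hsub, fun hh => hne hh.symm⟩
    have := (isFlat_cl hsm.out (Jx x ∪ Jx y)).rk_lt_of_ssubset hss
    rw [rk_Jx hsm.out] at this
    omega
  map_inf' x y := by
    apply Subtype.ext
    show Jx (x ⊓ y) = _
    rw [K_inf_val, Jx_inf]

lemma phi_injective : Function.Injective (phi (L := L)) := by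
  intro x y h
  have h1 : Jx x = Jx y := congrArg Subtype.val h
  have := sup_Jx (L := L) x
  rw [h1, sup_Jx] at this
  exact this.symm

lemma phi_strictMono : StrictMono (phi (L := L)) :=
  (OrderHomClass.mono (phi (L := L))).strictMono_of_injective phi_injective

/-- `K` has the same Krull dimension as `L`. -/
theorem K_krullDim : Order.krullDim (K L) = Order.krullDim L := by
  rw [← Order.height_top_eq_krullDim, ← Order.height_top_eq_krullDim]
  congr 1
  -- both heights equal hN (⊤ : L)
  have hKtop : Order.height (⊤ : K L) = (hN (⊤ : L) : ℕ∞) := by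
    apply le_antisymm
    · apply Order.height_le
      intro p hp
      -- rank strictly increases along p
      have := (p.map _ (K_rk_strictMono (L := L))).head_add_length_le_nat
      simp only [LTSeries.head_map, LTSeries.last_map] at this
      have hlast : rk (p.last).1 ≤ hN (⊤ : L) := by
        have h1 : rk (p.last).1 ≤ rk ((⊤ : K L)).1 := by
          rcases eq_or_lt_of_le (le_top : p.last ≤ ⊤) with h | h
          · rw [h]
          · exact (K_rk_strictMono h).le
        rw [K_top_val, ← Jx_top, rk_Jx hsm.out] at h1
        exact h1
      have hplen : p.length ≤ rk (p.last).1 := by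
        have h5 := (p.map _ (K_rk_strictMono (L := L))).head_add_length_le_nat
        simp only [LTSeries.head_map, LTSeries.last_map] at h5
        have h6 : (p.map _ (K_rk_strictMono (L := L))).length = p.length := rfl
        omega
      exact_mod_cast hplen.trans hlast
    · obtain ⟨q, hlast, hlen⟩ := Order.exists_series_of_height_eq_coe (⊤ : L)
        (coe_hN (⊤ : L)).symm
      have hmap := Order.length_le_height_last (p := q.map _ (phi_strictMono (L := L)))
      have hmaplen : (q.map _ (phi_strictMono (L := L))).length = hN (⊤ : L) := by
        simpa using hlen
      calc (hN (⊤ : L) : ℕ∞) = ((q.map _ (phi_strictMono (L := L))).length : ℕ∞) := by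
            exact_mod_cast hmaplen.symm
        _ ≤ Order.height (q.map _ (phi_strictMono (L := L))).last := hmap
        _ ≤ Order.height (⊤ : K L) := Order.height_mono le_top
  rw [hKtop, coe_hN]

lemma K_card_atoms : Nat.card {a : K L // IsAtom a} = Nat.card {a : L // SupIrred a} := by
  have hbij : Function.Bijective (fun q : JL L =>
      (⟨⟨{q}, isFlat_singleton q⟩, K_atom_singleton q⟩ : {a : K L // IsAtom a})) := by
    constructor
    · intro q q' h
      have := congrArg (fun A => A.1.1) h
      simpa using this
    · intro A
      obtain ⟨q, hq⟩ := K_atom_iff.mp A.2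
      exact ⟨q, Subtype.ext hq.symm⟩
  exact (Nat.card_eq_of_bijective _ hbij).symm

end Klattice
end GKproof

/-- Every finite semimodular lattice `L` has a length-preserving lattice embedding
into a finite geometric lattice `K` whose number of atoms is `|Jir L|`. -/
theorem embed_geometric_card (L : Type u) [CompleteLattice L] [Fintype L]
    (hL : Semimodular L) :
    ∃ (K : Type u) (_ : CompleteLattice K) (_ : Fintype K),
      Semimodular K ∧
      -- `K` is geometric: every nonzero join-irreducible element is an atom
      (∀ a : K, SupIrred a → IsAtom a) ∧
      -- a length-preserving lattice embedding
      (∃ f : LatticeHom L K, Function.Injective f) ∧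
      Order.krullDim K = Order.krullDim L ∧
      Nat.card {a : K // IsAtom a} = Nat.card {a : L // SupIrred a} := by
  haveI : Fact (Semimodular L) := ⟨hL⟩
  exact ⟨GKproof.K L, inferInstance, inferInstance,
    GKproof.K_semimodular, GKproof.K_geometric,
    ⟨GKproof.phi, GKproof.phi_injective⟩,
    GKproof.K_krullDim, GKproof.K_card_atoms⟩
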